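/- If integers z, c, n with n ≥ 2 satisfy z^n - c^4 = 1 and z^n > 0, then c = 0 and z^n = 1. -/

import Mathlib

open Zsqrtd
local notation "ℤ[i]" => GaussianInt

lemma L0 (t : ℕ) (ht : 2 ≤ t) : t + 2 ≤ 2 ^ t := by
  induction t with
  | zero => omega
  | succ k ih =>
    rcases Nat.lt_or_ge k 2 with hk | hk
    · interval_cases k <;> omega
    · have h1 := ih (by omega)
      have h2 : 2 ^ k ≤ 2 ^ (k+1) := Nat.pow_le_pow_right (by norm_num) (by omega)
      omega

lemma Lch (n r : ℕ) (hn : 1 ≤ n) (hr : 1 ≤ r) :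
    n.choose r * r = n * (n-1).choose (r-1) := by
  obtain ⟨n', rfl⟩ : ∃ n', n = n' + 1 := ⟨n - 1, by omega⟩
  obtain ⟨r', rfl⟩ : ∃ r', r = r' + 1 := ⟨r - 1, by omega⟩
  simp only [Nat.add_sub_cancel]
  rw [mul_comm (n'+1), ← Nat.add_one_mul_choose_eq]
  ring

-- 2^e | C(n,r) * r  for n odd, 2^e | n-1, r even
lemma L2 (n r e : ℕ) (hn3 : 3 ≤ n) (hne : 2^e ∣ n - 1) (hr : Even r) (hr2 : 2 ≤ r) :
    2^e ∣ n.choose r * r := by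
  have h1 : n.choose r * r = n * (n-1).choose (r-1) := Lch n r (by omega) (by omega)
  have h2 : (n-1).choose (r-1) * (r-1) = (n-1) * (n-2).choose (r-2) := by
    have := Lch (n-1) (r-1) (by omega) (by omega)
    simpa [Nat.sub_sub] using this
  have h3 : 2^e ∣ (n-1).choose (r-1) * (r-1) := h2 ▸ Dvd.dvd.mul_right hne _
  have hodd : Odd (r - 1) := by
    obtain ⟨t, rfl⟩ := hr; exact ⟨t - 1, by omega⟩
  have hcop : Nat.Coprime (2^e) (r-1) := Nat.Coprime.pow_left _ (by
    exact hodd.coprime_two_left)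
  have h4 : 2^e ∣ (n-1).choose (r-1) := hcop.dvd_of_dvd_mul_right h3
  rw [h1]
  exact Dvd.dvd.mul_left h4 _

lemma L3 (n r e : ℕ) (A a : ℤ) (hA : A = 2*a) (hn3 : 3 ≤ n)
    (hne : 2^e ∣ n - 1) (hr : Even r) (hr4 : 4 ≤ r) :
    (2^e : ℤ) ∣ (n.choose r : ℤ) * A^(r-2) := by
  obtain ⟨s, r', hr', hrs⟩ := Nat.exists_eq_pow_mul_and_not_dvd (show r ≠ 0 by omega) 2 (by norm_num)
  have hs1 : 1 ≤ s := by
    rcases Nat.eq_zero_or_pos s with h | h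
    · exfalso; apply hr'
      have h2 : (2:ℕ) ∣ r := hr.two_dvd
      rwa [hrs, h, pow_zero, one_mul] at h2
    · exact h
  have hsle : 2^s ≤ r := Nat.le_of_dvd (by omega) ⟨r', hrs⟩
  have hsr2 : s ≤ r - 2 := by
    rcases Nat.lt_or_ge s 2 with h | h
    · omega
    · have := L0 s h; omega
  have hd : 2^e ∣ n.choose r * 2^s * r' := by
    have h5 := L2 n r e hn3 hne hr (by omega)
    rw [hrs] at h5 ⊢
    rwa [← mul_assoc] at h5
  have hcop : Nat.Coprime (2^e) r' := Nat.Coprime.pow_left _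
    ((Nat.odd_iff.mpr (Nat.two_dvd_ne_zero.mp hr')).coprime_two_left)
  have hd2 : 2^e ∣ n.choose r * 2^s := hcop.dvd_of_dvd_mul_right hd
  have hd3 : ((2:ℤ)^e) ∣ (n.choose r : ℤ) * 2^s := by exact_mod_cast Int.natCast_dvd_natCast.mpr hd2
  calc ((2:ℤ)^e) ∣ (n.choose r : ℤ) * 2^s := hd3
    _ ∣ (n.choose r : ℤ) * A^(r-2) := by
        apply mul_dvd_mul_left
        rw [hA, mul_pow]
        exact dvd_mul_of_dvd_left (pow_dvd_pow 2 hsr2) _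

lemma Lsum (M : ℕ) (f : ℕ → ℤ) (hf : ∀ k, f (2*k) = 0) :
    ∑ j ∈ Finset.range (2*M+2), f j = ∑ k ∈ Finset.range (M+1), f (2*k+1) := by
  induction M with
  | zero => simpa [Finset.sum_range_succ] using hf 0
  | succ m ih =>
    rw [show 2*(m+1)+2 = (2*m+2)+1+1 from by ring, Finset.sum_range_succ, Finset.sum_range_succ,
      ih, Finset.sum_range_succ]
    have h1 : f (2*m+2) = 0 := by have := hf (m+1); rwa [show 2*(m+1) = 2*m+2 from by ring] at this
    have h2 : f (2*m+2+1) = f (2*(m+1)+1) := by ring_nf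
    rw [h1, h2, Finset.sum_range_succ, Finset.sum_range_succ]; ring

def imHom : ℤ[i] →+ ℤ := AddMonoidHom.mk' Zsqrtd.im (fun a b => rfl)

lemma Imul (c : ℤ) (x : ℤ[i]) : ((c:ℤ[i]) * x).im = c * x.im := by
  simp [Zsqrtd.im_mul]

lemma Isq : ((⟨0,1⟩:ℤ[i]))^2 = -1 := by
  ext <;> simp [pow_two, Zsqrtd.re_mul, Zsqrtd.im_mul]

lemma Ieven (k : ℕ) : ((⟨0,1⟩:ℤ[i])^(2*k)) = (((-1)^k : ℤ) : ℤ[i]) := by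
  rw [pow_mul, Isq]; push_cast; ring

lemma Ievenim (k : ℕ) : (((⟨0,1⟩:ℤ[i])^(2*k))).im = 0 := by
  rw [Ieven, Zsqrtd.im_intCast]

lemma Ioddim (k : ℕ) : (((⟨0,1⟩:ℤ[i])^(2*k+1))).im = (-1)^k := by
  rw [pow_succ, Ieven, Imul]; simp

lemma Gexp (A B : ℤ) (n : ℕ) :
    ((⟨A,B⟩:ℤ[i])^n).im
      = ∑ j ∈ Finset.range (n+1),
          B^j * A^(n-j) * (n.choose j) * ((⟨0,1⟩:ℤ[i])^j).im := by
  have h : (⟨A,B⟩:ℤ[i]) = (B:ℤ[i]) * ⟨0,1⟩ + (A:ℤ[i]) := by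
    ext <;> simp
  rw [h, add_pow]
  rw [show (∑ j ∈ Finset.range (n+1),
      ((B:ℤ[i]) * ⟨0,1⟩)^j * (A:ℤ[i])^(n-j) * ((n.choose j : ℕ) : ℤ[i])).im
      = imHom (∑ j ∈ Finset.range (n+1),
      ((B:ℤ[i]) * ⟨0,1⟩)^j * (A:ℤ[i])^(n-j) * ((n.choose j : ℕ) : ℤ[i])) from rfl,
    map_sum]
  apply Finset.sum_congr rfl
  intro j hj
  show (((B:ℤ[i]) * ⟨0,1⟩)^j * (A:ℤ[i])^(n-j) * ((n.choose j : ℕ) : ℤ[i])).im = _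
  have h2 : ((B:ℤ[i]) * ⟨0,1⟩)^j * (A:ℤ[i])^(n-j) * ((n.choose j : ℕ) : ℤ[i])
      = ((B^j * A^(n-j) * (n.choose j) : ℤ) : ℤ[i]) * (⟨0,1⟩:ℤ[i])^j := by
    push_cast; ring
  rw [h2, Imul]

lemma Gim_odd (A B : ℤ) (M : ℕ) :
    ((⟨A,B⟩:ℤ[i])^(2*M+1)).im
      = ∑ k ∈ Finset.range (M+1),
          B^(2*k+1) * A^(2*(M-k)) * ((2*M+1).choose (2*k+1)) * (-1)^k := by
  rw [Gexp]
  rw [show 2*M+1+1 = 2*M+2 from rfl]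
  rw [Lsum M _ (fun k => by rw [Ievenim]; ring)]
  apply Finset.sum_congr rfl
  intro k hk
  rw [Ioddim]
  have : 2*M+1 - (2*k+1) = 2*(M-k) := by omega
  rw [this]

lemma Lcore (A B : ℤ) (m : ℕ) (hB : B^2 = 1) (hA : Even A) (hA0 : A ≠ 0)
    (him : ((⟨A,B⟩:ℤ[i])^(2*(m+1)+1)).im = 1) : False := by
  set n : ℕ := 2*(m+1)+1 with hn
  obtain ⟨a, ha⟩ := hA
  have haA : A = 2*a := by omega
  have hBu : B = 1 ∨ B = -1 := Int.isUnit_iff.mp (IsUnit.of_mul_eq_one (a := B) B (by nlinarith [hB]))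
  rw [Gim_odd] at him
  have hBk : ∀ k : ℕ, B^(2*k+1) = B := by
    intro k; rw [pow_succ, pow_mul, hB, one_pow, one_mul]
  set V : ℤ := ∑ k ∈ Finset.range (m+2), A^(2*((m+1)-k)) * ((n).choose (2*k+1)) * (-1)^k with hV
  set T : ℤ := ∑ k ∈ Finset.range (m+1), A^(2*(m-k)) * ((n).choose (2*k+1)) * (-1)^k with hT
  have hsum : ∑ k ∈ Finset.range (m+1+1),
      B^(2*k+1) * A^(2*((m+1)-k)) * ((n).choose (2*k+1)) * (-1)^k = B * V := by
    rw [hV, Finset.mul_sum]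
    apply Finset.sum_congr rfl
    intro k hk
    rw [hBk k]; ring
  have him2 : B * V = 1 := by rw [← hsum]; exact him
  have hVT : V = A^2 * T + (-1)^(m+1) := by
    rw [hV, hT, Finset.sum_range_succ, Finset.mul_sum]
    have h1 : (n:ℕ).choose (2*(m+1)+1) = 1 := by rw [← hn, Nat.choose_self]
    rw [h1]
    have h2 : 2*((m+1)-(m+1)) = 0 := by omega
    rw [h2]
    have h3 : ∀ k ∈ Finset.range (m+1),
        A^(2*((m+1)-k)) * ((n).choose (2*k+1)) * (-1)^k
        = A^2 * (A^(2*(m-k)) * ((n).choose (2*k+1)) * (-1)^k) := by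
      intro k hk
      simp only [Finset.mem_range] at hk
      have h5 : 2*((m+1)-k) = 2*(m-k) + 2 := by omega
      rw [h5, pow_add]; ring
    rw [Finset.sum_congr rfl h3]
    push_cast
    ring
  have h4A : (4:ℤ) ∣ A^2 := ⟨a^2, by rw [haA]; ring⟩
  obtain ⟨a2, ha2⟩ := h4A
  have heq : A^2 * (B*T) = 1 - B*(-1)^(m+1) := by
    linear_combination him2 - B * hVT
  have hM1 : (-1:ℤ)^(m+1) = 1 ∨ (-1:ℤ)^(m+1) = -1 := neg_one_pow_eq_or ℤ (m+1)
  have hT0 : T = 0 := by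
    have key : A^2 * (B*T) = 0 := by
      rcases hBu with hB1 | hB1 <;> rcases hM1 with hM2 | hM2 <;>
        rw [hB1, hM2] at heq <;> norm_num at heq ⊢
      · tauto
      · exfalso
        have h2y : 2 * (2 * (a2 * T)) = 2 := by rw [ha2] at heq; linarith [heq]
        have h2y' : 2 * (a2 * T) = 1 := by linarith
        have : (2:ℤ) ∣ 1 := ⟨a2 * T, h2y'.symm⟩
        norm_num at this
      · exfalso
        have h2y : 2 * (2 * (a2 * (-T))) = 2 := by rw [ha2] at heq; linarith [heq]
        have h2y' : 2 * (a2 * (-T)) = 1 := by linarith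
        have : (2:ℤ) ∣ 1 := ⟨a2 * (-T), h2y'.symm⟩
        norm_num at this
      · tauto
    have hA2 : A^2 ≠ 0 := pow_ne_zero _ hA0
    rcases mul_eq_zero.mp key with h | h
    · exact absurd h hA2
    · rcases mul_eq_zero.mp h with h' | h'
      · rcases hBu with hB1 | hB1 <;> rw [hB1] at h' <;> norm_num at h'
      · exact h'
  -- 2-adic contradiction
  clear him hsum him2 hVT heq hV
  obtain ⟨e, q, hq, hnq⟩ := Nat.exists_eq_pow_mul_and_not_dvd
    (show (n:ℕ)-1 ≠ 0 by omega) 2 (by norm_num)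
  have hne : 2^e ∣ (n:ℕ) - 1 := ⟨q, hnq⟩
  have hdvdterm : ∀ k ∈ Finset.range m,
      (2^e : ℤ) ∣ A^(2*(m-k)) * ((n).choose (2*k+1)) * (-1)^k := by
    intro k hk
    simp only [Finset.mem_range] at hk
    set r : ℕ := 2*(m-k)+2 with hr
    have hch : (n:ℕ).choose r = (n:ℕ).choose (2*k+1) := by
      have h1 : (n:ℕ) - (2*k+1) = r := by omega
      rw [← h1, Nat.choose_symm (by omega)]
    have h2 := L3 n r e A a haA (by omega) hne ⟨m-k+1, by omega⟩ (by omega)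
    rw [hch] at h2
    have hr2 : r - 2 = 2*(m-k) := by omega
    rw [hr2] at h2
    have h6 : (2^e:ℤ) ∣ A^(2*(m-k)) * ((n:ℕ).choose (2*k+1) : ℤ) := by
      rwa [mul_comm] at h2
    exact h6.mul_right _
  have hTsplit : (0:ℤ) = (∑ k ∈ Finset.range m, A^(2*(m-k)) * ((n).choose (2*k+1)) * (-1)^k)
      + ((n:ℕ).choose (2*m+1) : ℤ) * (-1)^m := by
    rw [← hT0, hT, Finset.sum_range_succ]
    have h1 : 2*(m-m) = 0 := by omega
    rw [h1]; ring
  have hdvdsum : (2^e:ℤ) ∣ ∑ k ∈ Finset.range m, A^(2*(m-k)) * ((n).choose (2*k+1)) * (-1)^k :=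
    Finset.dvd_sum hdvdterm
  have hdvdC : (2^e:ℤ) ∣ ((n:ℕ).choose (2*m+1) : ℤ) * (-1)^m := by
    have h1 : ((n:ℕ).choose (2*m+1) : ℤ) * (-1)^m
        = -(∑ k ∈ Finset.range m, A^(2*(m-k)) * ((n).choose (2*k+1)) * (-1)^k) := by
      linarith [hTsplit]
    rw [h1]
    exact hdvdsum.neg_right
  have hdvdC2 : (2^e:ℤ) ∣ ((n:ℕ).choose (2*m+1) : ℤ) := by
    have h1 : ((n:ℕ).choose (2*m+1) : ℤ) * (-1)^m * (-1)^m = ((n:ℕ).choose (2*m+1) : ℤ) := by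
      rcases neg_one_pow_eq_or ℤ m with h | h <;> rw [h] <;> ring
    rw [← h1]
    exact hdvdC.mul_right _
  have hdvdN : 2^e ∣ (n:ℕ).choose (2*m+1) := by
    have := Int.natCast_dvd_natCast.mp (by exact_mod_cast hdvdC2)
    exact this
  have hsymm : (n:ℕ).choose (2*m+1) = (n:ℕ).choose 2 := by
    have h1 : (n:ℕ) - 2 = 2*m+1 := by omega
    rw [← h1, Nat.choose_symm (by omega)]
  rw [hsymm] at hdvdN
  have hc2 : (n:ℕ).choose 2 * 2 = n * (n-1) := by
    rw [Nat.choose_two_right]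
    apply Nat.div_mul_cancel
    have : (2:ℕ) ∣ n - 1 := ⟨m+1, by omega⟩
    exact Dvd.dvd.mul_left this n
  have hdvd2 : 2^(e+1) ∣ n * (n-1) := by
    rw [← hc2, pow_succ]
    exact Nat.mul_dvd_mul hdvdN dvd_rfl
  have hcop : Nat.Coprime (2^(e+1)) n := Nat.Coprime.pow_left _
    ((Nat.odd_iff.mpr (by omega)).coprime_two_left)
  have hdvd3 : 2^(e+1) ∣ n - 1 := hcop.dvd_of_dvd_mul_left hdvd2
  rw [hnq, pow_succ] at hdvd3
  have : 2 ∣ q := (Nat.mul_dvd_mul_iff_left (show 0 < 2^e by positivity)).mp hdvd3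
  exact hq this

lemma normdvd {x y : ℤ[i]} (h : x ∣ y) : x.norm ∣ y.norm := by
  obtain ⟨t, rfl⟩ := h; rw [Zsqrtd.norm_mul]; exact dvd_mul_right _ _

lemma unit4 (v : ℤ[i]) (hv : IsUnit v) : v^4 = 1 := by
  have h1 : v.norm = 1 := (Zsqrtd.norm_eq_one_iff' (by norm_num) v).mpr hv
  obtain ⟨a, b⟩ := v
  rw [Zsqrtd.norm_def] at h1
  simp only at h1
  have h2 : a * a + b * b = 1 := by linarith
  have ha1 : a^2 ≤ 1 := by nlinarith [sq_nonneg b, sq_nonneg a]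
  have hb1 : b^2 ≤ 1 := by nlinarith [sq_nonneg a, sq_nonneg b]
  have ha2 : a = 0 ∨ a = 1 ∨ a = -1 := Int.abs_le_one_iff.mp ((sq_le_one_iff_abs_le_one a).mp ha1)
  have hb2 : b = 0 ∨ b = 1 ∨ b = -1 := Int.abs_le_one_iff.mp ((sq_le_one_iff_abs_le_one b).mp hb1)
  rcases ha2 with h|h|h <;> rcases hb2 with h'|h'|h' <;> subst h h' <;>
    first
    | (exfalso; omega)
    | decide

lemma odd_case (zz y : ℤ) (m : ℕ) (hy : Even y)
    (h : y^2 + 1 = zz^(2*(m+1)+1)) : y = 0 := by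
  set n : ℕ := 2*(m+1)+1 with hn
  set p : ℤ[i] := ⟨y, 1⟩ with hp
  set q : ℤ[i] := ⟨y, -1⟩ with hq
  have hoddy : Odd (y^2+1) := by
    rcases hy with ⟨t, rfl⟩; exact ⟨2*t^2, by ring⟩
  have hpq : p * q = ((zz:ℤ[i]))^n := by
    have h1 : ((zz:ℤ[i]))^n = ((zz^n : ℤ) : ℤ[i]) := by push_cast; ring
    rw [h1, ← h, hp, hq]
    ext
    · rw [Zsqrtd.re_mul, Zsqrtd.re_intCast]; simp only; ring
    · rw [Zsqrtd.im_mul, Zsqrtd.im_intCast]; simp only; ring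
  -- coprimality
  have hnormp : p.norm = y^2+1 := by rw [hp, Zsqrtd.norm_def]; simp only; ring
  have hcop : IsCoprime p q := by
    set g : ℤ[i] := EuclideanDomain.gcd p q with hg
    have hg1 : g ∣ p := EuclideanDomain.gcd_dvd_left p q
    have hg2 : g ∣ q := EuclideanDomain.gcd_dvd_right p q
    have hgd : g ∣ (⟨0, 2⟩ : ℤ[i]) := by
      have : p - q = (⟨0, 2⟩ : ℤ[i]) := by rw [hp, hq]; ext <;> simp
      rw [← this]; exact dvd_sub hg1 hg2
    have hn1 : g.norm ∣ y^2+1 := hnormp ▸ normdvd hg1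
    have hn2 : g.norm ∣ 4 := by
      have h4 : (⟨0,2⟩ : ℤ[i]).norm = 4 := by rw [Zsqrtd.norm_def]; norm_num
      exact h4 ▸ normdvd hgd
    have ht1 : g.norm.natAbs ∣ (y^2+1).natAbs := Int.natAbs_dvd_natAbs.mpr hn1
    have ht2 : g.norm.natAbs ∣ 4 := by
      have := Int.natAbs_dvd_natAbs.mpr hn2; simpa using this
    have htodd : Odd (y^2+1).natAbs := Int.natAbs_odd.mpr hoddy
    have hto : Odd g.norm.natAbs := by
      rw [Nat.odd_iff]
      rw [Nat.odd_iff] at htodd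
      rcases Nat.even_or_odd g.norm.natAbs with he | ho
      · exfalso
        have h2 : 2 ∣ (y^2+1).natAbs := dvd_trans he.two_dvd ht1
        omega
      · exact Nat.odd_iff.mp ho
    have hco4 : Nat.Coprime g.norm.natAbs 4 := by
      have := (hto.coprime_two_right : Nat.Coprime g.norm.natAbs 2)
      have h4 : (4:ℕ) = 2^2 := by norm_num
      rw [h4]
      exact Nat.Coprime.pow_right _ this
    have hone : g.norm.natAbs = 1 := hco4.eq_one_of_dvd ht2
    have hgu : IsUnit g := Zsqrtd.norm_eq_one_iff.mp hone
    obtain ⟨v, hv⟩ := hgu.exists_right_inv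
    have hbez := EuclideanDomain.gcd_eq_gcd_ab p q
    refine ⟨EuclideanDomain.gcdA p q * v, EuclideanDomain.gcdB p q * v, ?_⟩
    have : (p * EuclideanDomain.gcdA p q + q * EuclideanDomain.gcdB p q) * v = 1 := by
      rw [← hbez]; exact hv
    calc EuclideanDomain.gcdA p q * v * p + EuclideanDomain.gcdB p q * v * q
        = (p * EuclideanDomain.gcdA p q + q * EuclideanDomain.gcdB p q) * v := by ring
      _ = 1 := this
  -- descent: p = w^n
  obtain ⟨w0, hw0⟩ := exists_associated_pow_of_mul_eq_pow' hcop hpq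
  obtain ⟨u, hu⟩ := hw0
  have hu4 : ((u:ℤ[i]))^4 = 1 := unit4 _ u.isUnit
  obtain ⟨kk, hkk⟩ : ∃ kk, n*n = 4*kk+1 := ⟨(m+2)*(m+1), by rw [hn]; ring⟩
  set w : ℤ[i] := w0 * (u:ℤ[i])^n with hw
  have hwn : w^n = p := by
    have h2 : (((u:ℤ[i]))^n)^n = (u:ℤ[i]) := by
      rw [← pow_mul, hkk, pow_add, pow_mul, hu4, one_pow, one_mul, pow_one]
    rw [hw, mul_pow, h2, hu]
  set A : ℤ := w.re with hA
  set B : ℤ := w.im with hB'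
  have hwAB : w = ⟨A, B⟩ := by ext <;> rfl
  have hstar : (star w)^n = q := by
    rw [← star_pow, hwn, hp, hq]
    ext <;> simp
  have hdvd : (⟨0, 2*B⟩ : ℤ[i]) ∣ (⟨0, 2⟩ : ℤ[i]) := by
    have h1 : w - star w = ⟨0, 2*B⟩ := by
      rw [hwAB]; ext <;> simp [Zsqrtd.re_sub, Zsqrtd.im_sub] <;> ring
    have h2 : w^n - (star w)^n = ⟨0, 2⟩ := by
      rw [hwn, hstar, hp, hq]; ext <;> simp [Zsqrtd.re_sub, Zsqrtd.im_sub]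
    rw [← h1, ← h2]
    exact sub_dvd_pow_sub_pow w (star w) n
  have hB2 : B^2 = 1 := by
    have h3 := normdvd hdvd
    rw [Zsqrtd.norm_def, Zsqrtd.norm_def] at h3
    simp only at h3
    have h4 : (4:ℤ) * B^2 ∣ 4 * 1 := by
      have e1 : (0:ℤ) * 0 - -1 * (2*B) * (2*B) = 4 * B^2 := by ring
      have e2 : (0:ℤ) * 0 - -1 * 2 * 2 = 4 * 1 := by ring
      rwa [e1, e2] at h3
    have h5 : B^2 ∣ 1 := (mul_dvd_mul_iff_left (by norm_num : (4:ℤ) ≠ 0)).mp h4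
    rcases Int.isUnit_iff.mp (isUnit_of_dvd_one h5) with h6 | h6
    · exact h6
    · nlinarith [sq_nonneg B]
  have hnormw : (A^2 + 1)^n = y^2 + 1 := by
    have h1 : (w^n).norm = p.norm := by rw [hwn]
    have h2 : (w^n).norm = (w.norm)^n := map_pow Zsqrtd.normMonoidHom w n
    have h3 : w.norm = A^2 + 1 := by
      rw [hwAB, Zsqrtd.norm_def]
      simp only
      nlinarith [hB2]
    rw [h2, h3, hnormp] at h1
    exact h1
  have hAeven : Even A := by
    have h1 : Odd ((A^2+1)^n) := hnormw ▸ hoddy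
    have h2 : ¬ Even (A^2+1) := by
      intro h3
      rcases h1 with ⟨t, ht⟩
      rcases (Int.even_pow.mpr ⟨h3, by omega⟩ : Even ((A^2+1)^n)) with ⟨s, hs⟩
      omega
    have h4 : Even (A^2) := by
      rcases Int.even_or_odd A with he | ho
      · exact (Int.even_pow.mpr ⟨he, by omega⟩)
      · exfalso; exact h2 (Odd.add_one (ho.pow))
    exact (Int.even_pow.mp h4).1
  rcases eq_or_ne A 0 with hA0 | hA0
  · have h1 : (A^2+1)^n = 1 := by rw [hA0]; norm_num
    have h2 : y^2 = 0 := by rw [h1] at hnormw; linarith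
    exact pow_eq_zero_iff (by norm_num) |>.mp h2
  · exfalso
    have him : ((⟨A,B⟩:ℤ[i])^(2*(m+1)+1)).im = 1 := by
      rw [← hwAB, ← hn, hwn, hp]
    exact Lcore A B m hB2 hAeven hA0 him

theorem stmt_10 (z c : ℤ) (n : ℕ) (hn : 2 ≤ n) (h : z ^ n - c ^ 4 = 1)
    (hpos : 0 < z ^ n) : c = 0 ∧ z ^ n = 1 := by
  have hzn : z^n = c^4 + 1 := by linarith
  have hc0 : c = 0 := by
    rcases Nat.even_or_odd n with he | ho
    · -- n even : use Fermat42
      obtain ⟨m, hm⟩ := he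
      by_contra hc
      have h1 : c^4 + 1^4 = (z^m)^2 := by
        rw [one_pow, ← hzn, hm, pow_add, pow_two]
      exact not_fermat_42 hc one_ne_zero h1
    · -- n odd, n ≥ 3
      obtain ⟨m, hm⟩ := ho
      obtain ⟨m', rfl⟩ : ∃ m', m = m' + 1 := ⟨m - 1, by omega⟩
      -- c must be even
      have hceven : Even c := by
        rcases Int.even_or_odd c with hc | hc
        · exact hc
        · exfalso
          have he1 : Even (z^n) := by
            rw [hzn]
            exact (hc.pow (n := 4)).add_one
          obtain ⟨d, hd⟩ := hc
          have hz2 : (2:ℤ) ∣ z := by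
            rcases (Int.even_pow.mp he1).1 with ⟨t, ht⟩
            exact ⟨t, by omega⟩
          have h8 : (8:ℤ) ∣ z^n := by
            calc (8:ℤ) = 2^3 := by norm_num
              _ ∣ 2^n := pow_dvd_pow 2 (by omega)
              _ ∣ z^n := pow_dvd_pow_of_dvd hz2 n
          obtain ⟨s, hs⟩ := h8
          have key : 8*s = 8*(2*d^4+4*d^3+3*d^2+d) + 2 := by
            rw [← hs, hzn, hd]; ring
          have h2 : (2:ℤ) = 8 * (s - (2*d^4+4*d^3+3*d^2+d)) := by ring_nf; linarith
          have : (8:ℤ) ∣ 2 := ⟨_, h2⟩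
          norm_num at this
      -- apply the odd case
      have hy : Even (c^2) := Int.even_pow.mpr ⟨hceven, by norm_num⟩
      have heq : (c^2)^2 + 1 = z^(2*(m'+1)+1) := by
        rw [← hm, hzn]; ring
      have := odd_case z (c^2) m' hy heq
      exact pow_eq_zero_iff (n := 2) (by norm_num) |>.mp this
  refine ⟨hc0, ?_⟩
  rw [hzn, hc0]
  norm_num
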